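/- arXiv:0709.4310 — 4 statements merged into one kernel-verified Lean document; each statement's English description precedes it below -/
import Mathlib

section
/- Let H be a separable Hilbert space and D a self-adjoint operator with trivial kernel whose inverse h = D⁻¹ is compact. Then the set {h·y·h : y ∈ B(H), y = y*} is norm dense in the space of self-adjoint compact operators on H. -/
open ContinuousLinearMap
set_option maxHeartbeats 1000000
set_option synthInstance.maxHeartbeats 400000
set_option linter.unusedSectionVars false

section Aux
variable {H : Type*} [NormedAddCommGroup H] [InnerProductSpace ℂ H] [CompleteSpace H]
local notation "⟪" x ", " y "⟫" => @inner ℂ _ _ x y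

noncomputable def Rone (a u : H) : H →L[ℂ] H := (innerSL ℂ a).smulRight u
lemma Rone_apply (a u x : H) : Rone a u x = ⟪a, x⟫ • u := rfl

lemma Rone_adjoint (a u : H) : adjoint (Rone a u) = Rone u a := by
  symm
  rw [eq_adjoint_iff]
  intro x y
  simp [Rone_apply, inner_smul_left, inner_smul_right, mul_comm]

lemma Rone_sa (a : H) : IsSelfAdjoint (Rone a a) := by
  rw [IsSelfAdjoint, star_eq_adjoint, Rone_adjoint]

lemma Rone_polar (u v : H) : Rone u v + Rone v u
    = (2:ℝ)⁻¹ • (Rone (u+v) (u+v) - Rone (u-v) (u-v)) := by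
  ext x
  simp only [Rone_apply, add_apply, ContinuousLinearMap.smul_apply, sub_apply,
    inner_add_left, inner_sub_left, smul_add, smul_sub, add_smul, sub_smul, smul_smul]
  module

lemma Rone_norm_le (a u : H) : ‖Rone a u‖ ≤ ‖a‖ * ‖u‖ := by
  refine opNorm_le_bound _ (by positivity) fun x => ?_
  rw [Rone_apply, norm_smul]
  calc ‖⟪a,x⟫‖ * ‖u‖ ≤ (‖a‖ * ‖x‖) * ‖u‖ :=
        mul_le_mul_of_nonneg_right (norm_inner_le_norm a x) (norm_nonneg u)
    _ = ‖a‖ * ‖u‖ * ‖x‖ := by ring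

lemma smul_sa (y : H →L[ℂ] H) (c : ℝ) (hy : IsSelfAdjoint y) : IsSelfAdjoint (c • y) := by
  rw [isSelfAdjoint_iff_isSymmetric] at hy ⊢
  intro x z
  show @inner ℂ _ _ (c • y x) z = @inner ℂ _ _ x (c • y z)
  rw [RCLike.real_smul_eq_coe_smul (K := ℂ), RCLike.real_smul_eq_coe_smul (K := ℂ),
    inner_smul_left, inner_smul_right, RCLike.conj_ofReal]
  congr 1
  exact hy x z

lemma dense_range_of_sa_inj (h : H →L[ℂ] H) (hsa : IsSelfAdjoint h)
    (hinj : Function.Injective h) (a : H) : a ∈ closure (Set.range h) := by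
  have hsym := isSelfAdjoint_iff_isSymmetric.mp hsa
  have : (LinearMap.range (h : H →ₗ[ℂ] H)).topologicalClosure = ⊤ := by
    rw [Submodule.topologicalClosure_eq_top_iff]
    rw [Submodule.eq_bot_iff]
    intro x hx
    have h0 : h x = 0 := by
      have := hx (h (h x)) ⟨h x, rfl⟩
      have h2 : ⟪h x, h x⟫ = 0 := (hsym (h x) x).symm.trans this
      exact inner_self_eq_zero.mp h2
    have : h x = h 0 := by simpa using h0
    exact hinj this
  have ha : a ∈ (LinearMap.range (h : H →ₗ[ℂ] H)).topologicalClosure := this ▸ Submodule.mem_top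
  rw [← SetLike.mem_coe, Submodule.topologicalClosure_coe, LinearMap.coe_range] at ha
  simpa using ha

noncomputable def Ssub (h : H →L[ℂ] H) : Submodule ℝ (H →L[ℂ] H) where
  carrier := {T : H →L[ℂ] H | ∃ y : H →L[ℂ] H, IsSelfAdjoint y ∧ T = h ∘L y ∘L h}
  zero_mem' := ⟨0, .zero _, by rw [zero_comp, comp_zero]⟩
  add_mem' := by
    rintro a b ⟨y, hy, rfl⟩ ⟨y', hy', rfl⟩
    refine ⟨y + y', hy.add hy', ?_⟩
    rw [add_comp, comp_add]
  smul_mem' := by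
    rintro c T ⟨y, hy, rfl⟩
    refine ⟨c • y, smul_sa y c hy, ?_⟩
    ext x
    simp only [ContinuousLinearMap.smul_apply, comp_apply]
    rw [map_smul_of_tower]
end Aux
section Proj
variable {H : Type*} [NormedAddCommGroup H] [InnerProductSpace ℂ H] [CompleteSpace H]
local notation "⟪" x ", " y "⟫" => @inner ℂ _ _ x y
variable {ι : Type*} (b : HilbertBasis ι ℂ H) (s : Finset ι)

noncomputable def Pb : H →L[ℂ] H := ∑ i ∈ s, Rone (b i) (b i)

lemma Pb_apply (x : H) : Pb b s x = ∑ i ∈ s, ⟪b i, x⟫ • b i := by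
  simp [Pb, ContinuousLinearMap.sum_apply, Rone_apply]

lemma Pb_sa : IsSelfAdjoint (Pb b s) := by
  rw [IsSelfAdjoint, Pb, star_sum]
  exact Finset.sum_congr rfl fun i _ => Rone_sa (b i)

lemma inner_bi_Pb (x : H) {i : ι} (hi : i ∈ s) : ⟪b i, Pb b s x⟫ = ⟪b i, x⟫ := by
  classical
  have horth : ∀ i j : ι, ⟪b i, b j⟫ = if i = j then 1 else 0 :=
    orthonormal_iff_ite.mp b.orthonormal
  rw [Pb_apply, inner_sum]
  simp only [inner_smul_right, horth, mul_ite, mul_one, mul_zero]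
  rw [Finset.sum_ite_eq s i (fun j => ⟪b j, x⟫), if_pos hi]

lemma inner_Pb_sub (x : H) : ⟪Pb b s x, x - Pb b s x⟫ = 0 := by
  have key : ∀ i ∈ s, ⟪b i, x - Pb b s x⟫ = 0 := fun i hi => by
    rw [inner_sub_right, inner_bi_Pb b s x hi, sub_self]
  generalize hw : x - Pb b s x = w at key ⊢
  rw [Pb_apply, sum_inner]
  refine Finset.sum_eq_zero fun i hi => ?_
  rw [inner_smul_left, key i hi, mul_zero]

lemma norm_sub_Pb_le (x : H) : ‖x - Pb b s x‖ ≤ ‖x‖ := by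
  have h0 := inner_Pb_sub b s x
  have := norm_add_sq_eq_norm_sq_add_norm_sq_of_inner_eq_zero (Pb b s x) (x - Pb b s x) h0
  have hx : Pb b s x + (x - Pb b s x) = x := by abel
  rw [hx] at this
  nlinarith [norm_nonneg (Pb b s x), norm_nonneg (x - Pb b s x), norm_nonneg x]

lemma norm_Pb_le (x : H) : ‖Pb b s x‖ ≤ ‖x‖ := by
  have h0 := inner_Pb_sub b s x
  have := norm_add_sq_eq_norm_sq_add_norm_sq_of_inner_eq_zero (Pb b s x) (x - Pb b s x) h0
  have hx : Pb b s x + (x - Pb b s x) = x := by abel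
  rw [hx] at this
  nlinarith [norm_nonneg (Pb b s x), norm_nonneg (x - Pb b s x), norm_nonneg x]

lemma Pb_opNorm : ‖Pb b s‖ ≤ 1 := by
  refine ContinuousLinearMap.opNorm_le_bound _ zero_le_one fun x => ?_
  rw [one_mul]; exact norm_Pb_le b s x

lemma Pb_tendsto (x : H) :
    Filter.Tendsto (fun s : Finset ι => Pb b s x) Filter.atTop (nhds x) := by
  have := b.hasSum_repr x
  have heq : ∀ s : Finset ι, Pb b s x = ∑ i ∈ s, b.repr x i • b i := by
    intro s
    rw [Pb_apply]
    refine Finset.sum_congr rfl fun i _ => ?_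
    rw [b.repr_apply_apply]
  simpa [HasSum, heq] using this

lemma compact_approx (k : H →L[ℂ] H) (hk : IsCompactOperator k)
    {ε : ℝ} (hε : 0 < ε) :
    ∃ s : Finset ι, ‖k - (Pb b s) ∘L k‖ ≤ ε := by
  classical
  obtain ⟨K, hKc, hKmem⟩ := hk
  obtain ⟨r, hr, hball⟩ := Metric.mem_nhds_iff.mp hKmem
  -- finite net of K
  obtain ⟨t, htfin, htcover⟩ := (Metric.totallyBounded_iff.mp hKc.totallyBounded) (r*ε/6) (by positivity)
  -- for each z in t choose a finset
  have hchoice : ∀ z : H, ∃ s0 : Finset ι, ∀ s : Finset ι, s0 ≤ s →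
      ‖z - Pb b s z‖ ≤ r*ε/6 := by
    intro z
    have htd := Pb_tendsto b z
    have : ∀ᶠ s : Finset ι in Filter.atTop, ‖z - Pb b s z‖ ≤ r*ε/6 := by
      have := Metric.tendsto_nhds.mp htd (r*ε/6) (by positivity)
      filter_upwards [this] with s hs
      rw [dist_eq_norm] at hs
      rw [norm_sub_rev]
      exact hs.le
    exact Filter.eventually_atTop.mp this
  choose s0 hs0 using hchoice
  set s : Finset ι := (htfin.toFinset).sup s0 with hs_def
  refine ⟨s, ?_⟩
  -- key: for all y in K, ‖y - Pb b s y‖ ≤ r*ε/3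
  have hkey : ∀ y ∈ K, ‖y - Pb b s y‖ ≤ r*ε/3 := by
    intro y hy
    obtain ⟨z, hzt, hyz⟩ := Set.mem_iUnion₂.mp (htcover hy)
    have h1 : ‖z - Pb b s z‖ ≤ r*ε/6 :=
      hs0 z s (Finset.le_sup (htfin.mem_toFinset.mpr hzt))
    have hd : ‖y - z‖ < r*ε/6 := by
      rw [← dist_eq_norm]; exact Metric.mem_ball.mp hyz
    have h2 : ‖(y - z) - Pb b s (y - z)‖ ≤ ‖y - z‖ := norm_sub_Pb_le b s (y - z)
    have hsplit : y - Pb b s y = ((y - z) - Pb b s (y - z)) + (z - Pb b s z) := by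
      rw [map_sub]; abel
    rw [hsplit]
    calc ‖((y - z) - Pb b s (y - z)) + (z - Pb b s z)‖
        ≤ ‖(y - z) - Pb b s (y - z)‖ + ‖z - Pb b s z‖ := norm_add_le _ _
      _ ≤ ‖y - z‖ + r*ε/6 := add_le_add h2 h1
      _ ≤ r*ε/6 + r*ε/6 := add_le_add hd.le le_rfl
      _ = r*ε/3 := by ring
  -- now bound the operator norm
  refine ContinuousLinearMap.opNorm_le_bound _ hε.le fun x => ?_
  rcases eq_or_ne x 0 with rfl | hx
  · simp
  · have hxn : (0:ℝ) < ‖x‖ := norm_pos_iff.mpr hx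
    set z : H := (r/2) • (‖x‖⁻¹ • x) with hz_def
    have hzn : ‖z‖ < r := by
      rw [hz_def, norm_smul, norm_smul, norm_inv, norm_norm, Real.norm_eq_abs,
        abs_of_pos (by positivity : (0:ℝ) < r/2)]
      rw [inv_mul_cancel₀ hxn.ne', mul_one]
      linarith
    have hzK : k z ∈ K := hball (Metric.mem_ball.mpr (by simpa using hzn))
    have hxz : x = (2*‖x‖/r) • z := by
      rw [hz_def, smul_smul, smul_smul,
        show (2*‖x‖/r) * (r/2) * ‖x‖⁻¹ = 1 by field_simp, one_smul]
    clear_value z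
    have happ : (k - (Pb b s) ∘L k) x = (2*‖x‖/r) • (k z - Pb b s (k z)) := by
      conv_lhs => rw [hxz]
      rw [ContinuousLinearMap.sub_apply, ContinuousLinearMap.comp_apply]
      rw [map_smul_of_tower, map_smul_of_tower, smul_sub]
    rw [happ, norm_smul, Real.norm_eq_abs, abs_of_pos (by positivity)]
    calc (2*‖x‖/r) * ‖k z - Pb b s (k z)‖ ≤ (2*‖x‖/r) * (r*ε/3) :=
          mul_le_mul_of_nonneg_left (hkey (k z) hzK) (by positivity)
      _ = (2*ε/3) * ‖x‖ := by field_simp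
      _ ≤ ε * ‖x‖ := by nlinarith
end Proj

section Main
variable {H : Type*} [NormedAddCommGroup H] [InnerProductSpace ℂ H] [CompleteSpace H]
local notation "⟪" x ", " y "⟫" => @inner ℂ _ _ x y

lemma hRh (h : H →L[ℂ] H) (hsa : IsSelfAdjoint h) (v : H) :
    h ∘L (Rone v v) ∘L h = Rone (h v) (h v) := by
  have hsym := isSelfAdjoint_iff_isSymmetric.mp hsa
  ext x
  show h ((Rone v v) (h x)) = Rone (h v) (h v) x
  rw [Rone_apply, Rone_apply, map_smul]
  congr 1
  exact (hsym v x).symm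

lemma Rone_diff (a c : H) : Rone a a - Rone c c = Rone a (a - c) + Rone (a - c) c := by
  ext x
  simp only [ContinuousLinearMap.sub_apply, ContinuousLinearMap.add_apply, Rone_apply,
    inner_sub_left, smul_sub, sub_smul]
  abel

lemma Rone_mem_closure (h : H →L[ℂ] H) (hsa : IsSelfAdjoint h)
    (hinj : Function.Injective h) (a : H) :
    Rone a a ∈ closure (Ssub h : Set (H →L[ℂ] H)) := by
  rw [Metric.mem_closure_iff]
  intro ε hε
  set δ : ℝ := min 1 (ε / (2*‖a‖+2)) with hδ_def
  have hδpos : 0 < δ := lt_min one_pos (by positivity)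
  obtain ⟨c, hc_mem, hc_dist⟩ := Metric.mem_closure_iff.mp
    (dense_range_of_sa_inj h hsa hinj a) δ hδpos
  obtain ⟨v, rfl⟩ := hc_mem
  refine ⟨Rone (h v) (h v), ⟨Rone v v, Rone_sa v, (hRh h hsa v).symm⟩, ?_⟩
  rw [dist_eq_norm]
  have hd : ‖a - h v‖ < δ := by rw [← dist_eq_norm]; exact hc_dist
  have hd1 : δ ≤ 1 := min_le_left _ _
  have hd2 : δ ≤ ε / (2*‖a‖+2) := min_le_right _ _
  have hcb : ‖h v‖ ≤ ‖a‖ + δ := by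
    calc ‖h v‖ = ‖a - (a - h v)‖ := by congr 1; abel
      _ ≤ ‖a‖ + ‖a - h v‖ := norm_sub_le _ _
      _ ≤ ‖a‖ + δ := by linarith
  calc ‖Rone a a - Rone (h v) (h v)‖
      = ‖Rone a (a - h v) + Rone (a - h v) (h v)‖ := by rw [Rone_diff]
    _ ≤ ‖Rone a (a - h v)‖ + ‖Rone (a - h v) (h v)‖ := norm_add_le _ _
    _ ≤ ‖a‖ * ‖a - h v‖ + ‖a - h v‖ * ‖h v‖ := add_le_add (Rone_norm_le _ _) (Rone_norm_le _ _)
    _ < ε := by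
        have h1 : ‖a‖ * ‖a - h v‖ ≤ ‖a‖ * δ :=
          mul_le_mul_of_nonneg_left hd.le (norm_nonneg a)
        have h2 : ‖a - h v‖ * ‖h v‖ ≤ δ * (‖a‖ + 1) := by
          apply mul_le_mul hd.le _ (norm_nonneg _) hδpos.le
          linarith
        have h3 : δ * (2*‖a‖+2) ≤ ε := by
          rw [← le_div_iff₀ (by positivity)]
          exact hd2
        nlinarith [norm_nonneg a]
end Main

/-- If h = D⁻¹ is a compact self-adjoint injective operator on a separable Hilbert space,
then {h·y·h : y bounded self-adjoint} is norm dense in the self-adjoint compact operators. -/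
theorem stmt_7 {H : Type*} [NormedAddCommGroup H] [InnerProductSpace ℂ H]
    [CompleteSpace H] [SecondCountableTopology H]
    (h : H →L[ℂ] H) (hcomp : IsCompactOperator h) (hsa : IsSelfAdjoint h)
    (hinj : Function.Injective h) :
    ∀ k : H →L[ℂ] H, IsCompactOperator k → IsSelfAdjoint k →
      k ∈ closure {T : H →L[ℂ] H |
        ∃ y : H →L[ℂ] H, IsSelfAdjoint y ∧ T = h ∘L y ∘L h} := by
  intro k hkc hksa
  classical
  have hCset : ((Ssub h).topologicalClosure : Set (H →L[ℂ] H))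
      = closure {T : H →L[ℂ] H | ∃ y : H →L[ℂ] H, IsSelfAdjoint y ∧ T = h ∘L y ∘L h} :=
    Submodule.topologicalClosure_coe _
  set C := (Ssub h).topologicalClosure with hC_def
  -- Reduce to approximation by elements of C
  suffices hsuff : ∀ ε > (0:ℝ), ∃ T ∈ (C : Set (H →L[ℂ] H)), dist k T < ε by
    have : k ∈ closure (C : Set (H →L[ℂ] H)) := Metric.mem_closure_iff.mpr hsuff
    rw [hCset, closure_closure] at this
    exact this
  intro ε hε
  obtain ⟨w, b, hb⟩ := exists_hilbertBasis ℂ H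
  obtain ⟨s, hs⟩ := compact_approx b k hkc (show (0:ℝ) < ε/3 by positivity)
  set P := Pb b s with hP_def
  have hPsa : IsSelfAdjoint P := Pb_sa b s
  have hPnorm : ‖P‖ ≤ 1 := Pb_opNorm b s
  set T := P ∘L k ∘L P with hT_def
  have hmemC : ∀ a : H, Rone a a ∈ C := fun a => by
    show Rone a a ∈ (C : Set (H →L[ℂ] H))
    rw [hC_def, Submodule.topologicalClosure_coe]
    exact Rone_mem_closure h hsa hinj a
  refine ⟨T, ?_, ?_⟩
  · -- T ∈ C
    set u : w → H := fun j => P (k (b j)) with hu_def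
    have hTA : T = ∑ j ∈ s, Rone (b j) (u j) := by
      ext x
      rw [hT_def, ContinuousLinearMap.comp_apply, ContinuousLinearMap.comp_apply,
        show P x = ∑ i ∈ s, @inner ℂ _ _ (b i) x • b i from Pb_apply b s x,
        map_sum, map_sum, ContinuousLinearMap.sum_apply]
      refine Finset.sum_congr rfl fun j _ => ?_
      rw [Rone_apply, map_smul, map_smul]
    have hTsa : IsSelfAdjoint T := by
      have h1 : IsSelfAdjoint (P * k * star P) := hksa.conjugate P
      rw [hPsa.star_eq] at h1
      have h2 : P * k * P = T := by
        rw [hT_def]; rfl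
      rwa [h2] at h1
    have hBA : (∑ j ∈ s, Rone (u j) (b j)) = ∑ j ∈ s, Rone (b j) (u j) := by
      have hadj : ContinuousLinearMap.adjoint (∑ j ∈ s, Rone (b j) (u j))
          = ∑ j ∈ s, Rone (u j) (b j) := by
        rw [map_sum]
        exact Finset.sum_congr rfl fun j _ => Rone_adjoint (b j) (u j)
      have := hTsa
      rw [hTA] at this
      rw [← hadj, ← ContinuousLinearMap.star_eq_adjoint, this.star_eq]
    have hsplit : T = (2:ℝ)⁻¹ • ((∑ j ∈ s, Rone (b j) (u j)) + ∑ j ∈ s, Rone (u j) (b j)) := by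
      rw [hBA, hTA]
      module
    rw [hsplit]
    refine Submodule.smul_mem C _ ?_
    rw [← Finset.sum_add_distrib]
    refine Submodule.sum_mem C fun j _ => ?_
    rw [Rone_polar (b j) (u j)]
    exact Submodule.smul_mem C _ (Submodule.sub_mem C (hmemC _) (hmemC _))
  · -- dist k T < ε
    rw [dist_eq_norm]
    have hadjnorm : ‖k - k ∘L P‖ = ‖k - P ∘L k‖ := by
      have : k - k ∘L P = ContinuousLinearMap.adjoint (k - P ∘L k) := by
        rw [map_sub, ContinuousLinearMap.adjoint_comp, ← ContinuousLinearMap.star_eq_adjoint,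
          ← ContinuousLinearMap.star_eq_adjoint, hksa.star_eq, hPsa.star_eq]
      rw [this, LinearIsometryEquiv.norm_map]
    have h2 : ‖P ∘L k - T‖ ≤ ε/3 := by
      have he : P ∘L k - T = P ∘L (k - k ∘L P) := by
        rw [ContinuousLinearMap.comp_sub, hT_def]
      rw [he]
      calc ‖P ∘L (k - k ∘L P)‖ ≤ ‖P‖ * ‖k - k ∘L P‖ := ContinuousLinearMap.opNorm_comp_le _ _
        _ ≤ 1 * ‖k - k ∘L P‖ := by
            apply mul_le_mul_of_nonneg_right hPnorm (norm_nonneg _)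
        _ = ‖k - P ∘L k‖ := by rw [one_mul, hadjnorm]
        _ ≤ ε/3 := hs
    calc ‖k - T‖ = ‖(k - P ∘L k) + (P ∘L k - T)‖ := by congr 1; abel
      _ ≤ ‖k - P ∘L k‖ + ‖P ∘L k - T‖ := norm_add_le _ _
      _ ≤ ε/3 + ε/3 := add_le_add hs h2
      _ < ε := by linarith
end

section
/- Let H be a Hilbert space, D a self-adjoint operator with compact inverse h = D⁻¹, and let U° = {k compact self-adjoint on H : Dk is bounded with ‖Dk‖ ≤ 1 and kD bounded}. Then for every ε > 0 there is a finite-rank spectral projection E of h with ‖h(I−E)‖ < ε such that for all k ∈ U°: ‖k(I−E)‖ ≤ ε and ‖(I−E)k‖ ≤ ε. Consequently U° is totally bounded, hence relatively norm compact, in the space of compact operators. -/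
open scoped InnerProductSpace
open Filter Metric

section Aux

variable {H : Type*} [NormedAddCommGroup H] [InnerProductSpace ℂ H] [CompleteSpace H]

lemma aux_exists_eig (T : H →L[ℂ] H) (hTc : IsCompactOperator T) (hTsa : IsSelfAdjoint T)
    (hT0 : T ≠ 0) : ∃ (r : ℝ) (v : H), v ≠ 0 ∧ |r| = ‖T‖ ∧ T v = (r : ℂ) • v := by
  have hTpos : 0 < ‖T‖ := norm_pos_iff.mpr hT0
  -- a sequence of unit vectors almost attaining the norm
  have hsel : ∀ n : ℕ, ∃ u : H, ‖u‖ = 1 ∧ ‖T‖ * (1 - 1/(n+2)) < ‖T u‖ := by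
    intro n
    have h01 : (0:ℝ) < 1/((n:ℝ)+2) := by positivity
    have h11 : 1/((n:ℝ)+2) ≤ 1 := by
      rw [div_le_one (by positivity)]; linarith [Nat.cast_nonneg (α := ℝ) n]
    have hlt : ‖T‖ * (1 - 1/((n:ℝ)+2)) < ‖T‖ := by nlinarith
    obtain ⟨x, hx1, hx2⟩ := T.exists_lt_apply_of_lt_opNorm hlt
    have hcnn : 0 ≤ ‖T‖ * (1 - 1/((n:ℝ)+2)) := by nlinarith
    have hxpos : 0 < ‖x‖ := by
      rcases eq_or_lt_of_le (norm_nonneg x) with h | h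
      · exfalso
        have : x = 0 := by simpa using h.symm
        rw [this, map_zero, norm_zero] at hx2; nlinarith
      · exact h
    refine ⟨‖x‖⁻¹ • x, ?_, ?_⟩
    · rw [norm_smul, norm_inv, norm_norm, inv_mul_cancel₀ hxpos.ne']
    · rw [T.map_smul_of_tower, norm_smul, norm_inv, norm_norm]
      calc ‖T‖ * (1 - 1/((n:ℝ)+2)) < ‖T x‖ := hx2
        _ ≤ ‖x‖⁻¹ * ‖T x‖ :=
          le_mul_of_one_le_left (norm_nonneg _) ((one_le_inv₀ hxpos).mpr hx1.le)
  choose u hu1 hu2 using hsel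
  have hTu_le : ∀ n, ‖T (u n)‖ ≤ ‖T‖ := fun n => by
    simpa [hu1 n] using T.le_opNorm (u n)
  have hTu_pos : ∀ n, 0 < ‖T (u n)‖ := by
    intro n
    have h01 : (0:ℝ) < 1/((n:ℝ)+2) := by positivity
    have h11 : 1/((n:ℝ)+2) ≤ 1 := by
      rw [div_le_one (by positivity)]; linarith [Nat.cast_nonneg (α := ℝ) n]
    have hcnn : 0 ≤ ‖T‖ * (1 - 1/((n:ℝ)+2)) := by nlinarith
    exact lt_of_le_of_lt hcnn (hu2 n)
  -- ‖T (u n)‖ → ‖T‖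
  have hlo : Tendsto (fun n : ℕ => ‖T‖ * (1 - 1/((n:ℝ)+2))) atTop (nhds ‖T‖) := by
    have h2 : Tendsto (fun n : ℕ => (n:ℝ)+2) atTop atTop :=
      Filter.tendsto_atTop_add_const_right atTop 2 tendsto_natCast_atTop_atTop
    have h3 : Tendsto (fun n : ℕ => 1/((n:ℝ)+2)) atTop (nhds 0) := by
      simpa [one_div, Function.comp_def] using tendsto_inv_atTop_zero.comp h2
    have := (tendsto_const_nhds (x := ‖T‖) (f := atTop (α := ℕ))).mul
      ((tendsto_const_nhds (x := (1:ℝ))).sub h3)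
    simpa using this
  have htend : Tendsto (fun n => ‖T (u n)‖) atTop (nhds ‖T‖) :=
    tendsto_of_tendsto_of_tendsto_of_le_of_le hlo tendsto_const_nhds
      (fun n => (hu2 n).le) hTu_le
  -- the defect vectors
  set a : ℕ → H := fun n => T (T (u n)) - ((‖T (u n)‖^2 : ℝ) : ℂ) • u n with ha_def
  have ha_sq : ∀ n, ‖a n‖^2 = ‖T (T (u n))‖^2 - ‖T (u n)‖^4 := by
    intro n
    have h1 : ⟪T (T (u n)), ((‖T (u n)‖^2 : ℝ) : ℂ) • u n⟫_ℂ
        = ((‖T (u n)‖^2 : ℝ) : ℂ) * ((‖T (u n)‖:ℝ) : ℂ)^2 := by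
      rw [inner_smul_right]
      congr 1
      have := hTsa.isSymmetric (T (u n)) (u n)
      simp only [ContinuousLinearMap.coe_coe] at this
      rw [this]
      exact inner_self_eq_norm_sq_to_K (𝕜 := ℂ) (T (u n))
    rw [ha_def]
    simp only []
    rw [norm_sub_sq (𝕜 := ℂ), h1, norm_smul]
    have : RCLike.re (((‖T (u n)‖^2 : ℝ) : ℂ) * ((‖T (u n)‖:ℝ) : ℂ)^2)
        = ‖T (u n)‖^2 * ‖T (u n)‖^2 := by
      simp [← Complex.ofReal_pow, RCLike.re_to_complex]
    rw [this, hu1 n, Complex.norm_real,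
      Real.norm_of_nonneg (by positivity : (0:ℝ) ≤ ‖T (u n)‖^2)]
    ring
  -- a n → 0
  have ha0 : Tendsto a atTop (nhds 0) := by
    rw [tendsto_zero_iff_norm_tendsto_zero]
    have hsq : Tendsto (fun n => ‖a n‖^2) atTop (nhds 0) := by
      have hrhs : Tendsto (fun n => ‖T (u n)‖^2 * (‖T‖^2 - ‖T (u n)‖^2)) atTop
          (nhds (‖T‖^2 * (‖T‖^2 - ‖T‖^2))) := by
        exact ((htend.pow 2).mul ((tendsto_const_nhds).sub (htend.pow 2)))
      have hrhs0 : Tendsto (fun n => ‖T (u n)‖^2 * (‖T‖^2 - ‖T (u n)‖^2)) atTop (nhds 0) := by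
        simpa using hrhs
      refine squeeze_zero (fun n => by positivity) (fun n => ?_) hrhs0
      rw [ha_sq n]
      have h2 := T.le_opNorm (T (u n))
      nlinarith [norm_nonneg (T (T (u n))), norm_nonneg (T (u n))]
    have := hsq.sqrt
    simpa [Real.sqrt_sq (norm_nonneg _)] using this
  -- compactness: subsequence of T (T (u n)) converges
  have hK : IsCompact (closure (⇑T '' closedBall 0 ‖T‖)) :=
    hTc.isCompact_closure_image_closedBall (𝕜₁ := ℂ) ‖T‖
  have hmem : ∀ n, T (T (u n)) ∈ closure (⇑T '' closedBall 0 ‖T‖) := fun n =>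
    subset_closure ⟨T (u n), by simpa using hTu_le n, rfl⟩
  obtain ⟨z, hz, φ, hφ, hzt⟩ := hK.tendsto_subseq hmem
  have hμne : ((‖T‖^2 : ℝ) : ℂ) ≠ 0 := by
    simp only [ne_eq, Complex.ofReal_eq_zero]
    positivity
  obtain ⟨x, hxdef⟩ : ∃ x : H, x = (((‖T‖^2 : ℝ) : ℂ))⁻¹ • z := ⟨_, rfl⟩
  have hμn : Tendsto (fun n => ((‖T (u (φ n))‖^2 : ℝ) : ℂ)) atTop (nhds ((‖T‖^2 : ℝ) : ℂ)) := by
    exact (Complex.continuous_ofReal.tendsto _).comp ((htend.comp hφ.tendsto_atTop).pow 2)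
  have hrepr : ∀ n, u (φ n)
      = (((‖T (u (φ n))‖^2 : ℝ):ℂ))⁻¹ • (T (T (u (φ n))) - a (φ n)) := by
    intro n
    have hne : ((‖T (u (φ n))‖^2 : ℝ):ℂ) ≠ 0 := by
      simp only [ne_eq, Complex.ofReal_eq_zero]
      exact pow_ne_zero _ (hTu_pos _).ne'
    have : T (T (u (φ n))) - a (φ n) = ((‖T (u (φ n))‖^2 : ℝ):ℂ) • u (φ n) := by
      simp only [ha_def]; exact sub_sub_cancel _ _
    rw [this, smul_smul, inv_mul_cancel₀ hne, one_smul]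
  have hux : Tendsto (fun n => u (φ n)) atTop (nhds x) := by
    have h1 : Tendsto (fun n => (((‖T (u (φ n))‖^2 : ℝ):ℂ))⁻¹
        • (T (T (u (φ n))) - a (φ n))) atTop (nhds ((((‖T‖^2 : ℝ) : ℂ))⁻¹ • (z - 0))) :=
      (hμn.inv₀ hμne).smul (hzt.sub (ha0.comp hφ.tendsto_atTop))
    rw [sub_zero, ← hxdef] at h1
    exact Tendsto.congr (fun n => (hrepr n).symm) h1
  have hx1 : ‖x‖ = 1 := by
    have h1 := hux.norm
    have h2 : Tendsto (fun n => ‖u (φ n)‖) atTop (nhds 1) := by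
      simpa [hu1] using tendsto_const_nhds (x := (1:ℝ)) (f := atTop (α := ℕ))
    exact tendsto_nhds_unique h2 h1 |>.symm ▸ rfl
  have hxne : x ≠ 0 := by
    intro h0; rw [h0, norm_zero] at hx1; norm_num at hx1
  have hT2x : T (T x) = ((‖T‖^2:ℝ):ℂ) • x := by
    have h1 : Tendsto (fun n => T (T (u (φ n)))) atTop (nhds (T (T x))) :=
      (T.continuous.tendsto _).comp ((T.continuous.tendsto _).comp hux)
    have h2 : T (T x) = z := tendsto_nhds_unique h1 hzt
    rw [h2, hxdef, smul_smul, mul_inv_cancel₀ hμne, one_smul]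
  -- factor
  by_cases hw : T x + ((‖T‖:ℝ):ℂ) • x = 0
  · refine ⟨-‖T‖, x, hxne, by simp [abs_of_pos hTpos], ?_⟩
    have : T x = -(((‖T‖:ℝ):ℂ) • x) := eq_neg_of_add_eq_zero_left hw
    rw [this]
    push_cast
    rw [neg_smul]
  · refine ⟨‖T‖, T x + ((‖T‖:ℝ):ℂ) • x, hw, abs_of_pos hTpos, ?_⟩
    rw [map_add, map_smul, hT2x, smul_add, smul_smul, add_comm]
    have hc : ((‖T‖^2:ℝ):ℂ) = ((‖T‖:ℝ):ℂ) * ((‖T‖:ℝ):ℂ) := by push_cast; ring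
    rw [hc]

lemma aux_spectral (h : H →L[ℂ] H) (hc : IsCompactOperator h) (hsa : IsSelfAdjoint h)
    {ε : ℝ} (hε : 0 < ε) :
    ∃ E : H →L[ℂ] H, IsIdempotentElem E ∧ IsSelfAdjoint E ∧
      FiniteDimensional ℂ (LinearMap.range (E : H →ₗ[ℂ] H)) ∧ Commute h E ∧
      ‖h ∘L (1 - E)‖ < ε ∧ ‖E‖ ≤ 1 := by
  classical
  set ε' : ℝ := ε/2 with hε'def
  have hε' : 0 < ε' := by positivity
  have hε'ε : ε' < ε := by rw [hε'def]; linarith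
  set hl : H →ₗ[ℂ] H := (h : H →ₗ[ℂ] H) with hldef
  set ι := {l : ℂ // ε' ≤ ‖l‖} with hιdef
  set p : ι → Submodule ℂ H := fun l => Module.End.eigenspace hl (l : ℂ) with hpdef
  set W₀ : Submodule ℂ H := ⨆ i : ι, p i with hW₀def
  -- preimage bound on W₀
  have hpre : ∀ x ∈ W₀, ∃ y, h y = x ∧ ‖y‖ ≤ ε'⁻¹ * ‖x‖ := by
    intro x hx
    obtain ⟨f, hf⟩ := (Submodule.mem_iSup_iff_exists_dfinsupp' p x).mp hx
    have ofam : OrthogonalFamily ℂ (fun i : ι => ↥(p i)) (fun i => (p i).subtypeₗᵢ) :=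
      (hsa.isSymmetric.orthogonalFamily_eigenspaces).comp Subtype.coe_injective
    set g : ∀ i, ↥(p i) := fun i => (((i : ℂ))⁻¹ : ℂ) • f i with hgdef
    set y : H := ∑ i ∈ f.support, ↑(g i) with hydef
    have hine : ∀ i : ι, (i : ℂ) ≠ 0 := by
      intro i
      have := i.2
      intro h0
      rw [h0, norm_zero] at this
      linarith
    refine ⟨y, ?_, ?_⟩
    · rw [hydef, map_sum]
      rw [← hf, DFinsupp.sum]
      apply Finset.sum_congr rfl
      intro i _
      have hfi : h ↑(f i) = (i:ℂ) • (↑(f i) : H) := Module.End.mem_eigenspace_iff.mp (f i).2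
      rw [hgdef]
      simp only [Submodule.coe_smul]
      rw [map_smul, hfi, smul_smul, inv_mul_cancel₀ (hine i), one_smul]
    · have hy2 : ‖y‖^2 = ∑ i ∈ f.support, ‖g i‖^2 := ofam.norm_sum g f.support
      have hx2 : ‖x‖^2 = ∑ i ∈ f.support, ‖f i‖^2 := by
        rw [← hf, DFinsupp.sum]
        exact ofam.norm_sum f f.support
      have hterm : ∀ i ∈ f.support, ‖g i‖^2 ≤ ε'⁻¹^2 * ‖f i‖^2 := by
        intro i _
        rw [hgdef]
        simp only [norm_smul, norm_inv, mul_pow]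
        have h1 : ‖(i:ℂ)‖⁻¹ ≤ ε'⁻¹ := inv_anti₀ hε' i.2
        have h2 : (0:ℝ) ≤ ‖(i:ℂ)‖⁻¹ := by positivity
        have h3 : ‖(i:ℂ)‖⁻¹^2 ≤ ε'⁻¹^2 := by nlinarith
        exact mul_le_mul_of_nonneg_right h3 (sq_nonneg ‖f i‖)
      have hle : ‖y‖^2 ≤ (ε'⁻¹ * ‖x‖)^2 := by
        rw [hy2, mul_pow, hx2, Finset.mul_sum]
        exact Finset.sum_le_sum hterm
      have h1 : (0:ℝ) ≤ ε'⁻¹ * ‖x‖ := by positivity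
      nlinarith [norm_nonneg y]
  set W : Submodule ℂ H := W₀.topologicalClosure with hWdef
  -- the unit ball of W is compact, so W is finite dimensional
  have hWfd : FiniteDimensional ℂ ↥W := by
    have hK : IsCompact (closure (⇑h '' closedBall 0 (2*ε'⁻¹))) :=
      hc.isCompact_closure_image_closedBall (𝕜₁ := ℂ) _
    have hsub : (↑W ∩ closedBall (0:H) 1) ⊆ closure (⇑h '' closedBall 0 (2*ε'⁻¹)) := by
      rintro x ⟨hxW, hx1⟩
      rw [mem_closedBall, dist_zero_right] at hx1
      have hxW' : x ∈ closure (↑W₀ : Set H) := hxW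
      obtain ⟨w, hwm, hwt⟩ := mem_closure_iff_seq_limit.mp hxW'
      apply mem_closure_of_tendsto hwt
      have hev : ∀ᶠ n in atTop, ‖w n‖ < 2 := hwt.norm.eventually_lt_const (by linarith)
      filter_upwards [hev] with n hn
      obtain ⟨y, hy1, hy2⟩ := hpre (w n) (hwm n)
      refine ⟨y, ?_, hy1⟩
      rw [mem_closedBall, dist_zero_right]
      nlinarith [inv_nonneg.mpr hε'.le]
    have hS : IsCompact (↑W ∩ closedBall (0:H) 1) :=
      hK.of_isClosed_subset (W₀.isClosed_topologicalClosure.inter Metric.isClosed_closedBall) hsub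
    apply FiniteDimensional.of_isCompact_closedBall₀ ℂ (one_pos)
    have himg : (Subtype.val '' (closedBall (0:↥W) 1)) = ↑W ∩ closedBall (0:H) 1 := by
      ext v
      constructor
      · rintro ⟨⟨v, hv⟩, hb, rfl⟩
        rw [mem_closedBall, dist_zero_right] at hb
        exact ⟨hv, by rw [mem_closedBall, dist_zero_right]; exact hb⟩
      · rintro ⟨hv, hb⟩
        rw [mem_closedBall, dist_zero_right] at hb
        exact ⟨⟨v, hv⟩, by rw [mem_closedBall, dist_zero_right]; exact hb, rfl⟩
    have hcpt : IsCompact (Subtype.val '' (closedBall (0:↥W) 1)) := by rw [himg]; exact hS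
    exact Topology.IsEmbedding.subtypeVal.isCompact_iff.mpr hcpt
  haveI : CompleteSpace ↥W := FiniteDimensional.complete ℂ ↥W
  set E : H →L[ℂ] H := W.subtypeL ∘L W.orthogonalProjectionOnto with hEdef
  have hEapp : ∀ x : H, E x = ↑(W.orthogonalProjectionOnto x) := fun x => rfl
  have hEmem : ∀ x : H, E x ∈ W := fun x => (W.orthogonalProjectionOnto x).2
  have hEW : ∀ w ∈ W, E w = w := by
    intro w hw
    have h0 : W.orthogonalProjectionOnto w = ⟨w, hw⟩ :=
      Submodule.orthogonalProjectionOnto_mem_subspace_eq_self (⟨w, hw⟩ : ↥W)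
    rw [hEapp, h0]
  have hEperp : ∀ v ∈ Wᗮ, E v = 0 := by
    intro v hv
    rw [hEapp, Submodule.orthogonalProjectionOnto_apply_of_mem_orthogonal hv]
    rfl
  have hsubmem : ∀ x : H, x - E x ∈ Wᗮ := fun x => Submodule.sub_starProjection_mem_orthogonal x
  -- idempotent
  have hidem : IsIdempotentElem E := by
    rw [IsIdempotentElem, ContinuousLinearMap.mul_def]
    ext x
    exact hEW (E x) (hEmem x)
  -- self adjoint
  have hEsa : IsSelfAdjoint E := isSelfAdjoint_starProjection W
  -- norm bounds
  have hdec : ∀ x : H, ‖E x‖^2 + ‖x - E x‖^2 = ‖x‖^2 := by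
    intro x
    have horth : ⟪E x, x - E x⟫_ℂ = 0 :=
      Submodule.inner_right_of_mem_orthogonal (hEmem x) (hsubmem x)
    have := norm_add_sq (𝕜 := ℂ) (E x) (x - E x)
    rw [horth] at this
    simp only [map_zero, mul_zero, add_zero] at this
    have hxe : E x + (x - E x) = x := by abel
    rw [hxe] at this
    linarith [this]
  have hEnorm1 : ∀ x : H, ‖E x‖ ≤ ‖x‖ := by
    intro x
    have := hdec x
    nlinarith [norm_nonneg (E x), norm_nonneg x, norm_nonneg (x - E x)]
  have hsubnorm : ∀ x : H, ‖x - E x‖ ≤ ‖x‖ := by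
    intro x
    have := hdec x
    nlinarith [norm_nonneg (E x), norm_nonneg x, norm_nonneg (x - E x)]
  have hEnorm : ‖E‖ ≤ 1 := by
    apply ContinuousLinearMap.opNorm_le_bound _ zero_le_one
    intro x
    rw [one_mul]
    exact hEnorm1 x
  -- finite rank
  have hrange : LinearMap.range (E : H →ₗ[ℂ] H) ≤ W := by
    rintro _ ⟨x, rfl⟩
    exact hEmem x
  have hfr : FiniteDimensional ℂ (LinearMap.range (E : H →ₗ[ℂ] H)) := Submodule.finiteDimensional_of_le hrange
  -- invariance
  have hW₀inv : ∀ w ∈ W₀, h w ∈ W₀ := by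
    intro w hw
    have : W₀ ≤ Submodule.comap hl W₀ := by
      apply iSup_le
      intro i x hx
      rw [Submodule.mem_comap]
      have hx' : hl x = (i:ℂ) • x := Module.End.mem_eigenspace_iff.mp hx
      rw [hx']
      exact le_iSup p i (Submodule.smul_mem _ _ hx)
    exact this hw
  have hWinv : ∀ w ∈ W, h w ∈ W := by
    intro w hw
    have hw' : w ∈ closure (↑W₀ : Set H) := hw
    have : h w ∈ closure (↑W₀ : Set H) :=
      map_mem_closure h.continuous hw' (fun z hz => hW₀inv z hz)
    exact this
  have hWperpinv : ∀ v ∈ Wᗮ, h v ∈ Wᗮ := by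
    intro v hv
    rw [Submodule.mem_orthogonal]
    intro u hu
    have h1 : ⟪h u, v⟫_ℂ = ⟪u, h v⟫_ℂ := by
      have := hsa.isSymmetric u v
      simpa using this
    rw [← h1]
    exact (Submodule.mem_orthogonal W v).mp hv (h u) (hWinv u hu)
  -- commutation
  have hcomm : Commute h E := by
    rw [Commute, SemiconjBy]
    ext x
    rw [ContinuousLinearMap.mul_apply, ContinuousLinearMap.mul_apply]
    have hx : h x = h (E x) + h (x - E x) := by rw [← map_add]; congr 1; abel
    rw [hx, map_add, hEW _ (hWinv _ (hEmem x)), hEperp _ (hWperpinv _ (hsubmem x)), add_zero]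
  -- the restriction of h to Wᗮ
  haveI : CompleteSpace ↥Wᗮ := (Submodule.isClosed_orthogonal W).completeSpace_coe
  set g : ↥Wᗮ →L[ℂ] ↥Wᗮ :=
    (Wᗮ).orthogonalProjectionOnto ∘L (h ∘L (Wᗮ).subtypeL) with hgdef
  have hgapp : ∀ y : ↥Wᗮ, (g y : H) = h ↑y := by
    intro y
    have hmem : h ↑y ∈ Wᗮ := hWperpinv _ y.2
    have : (Wᗮ).orthogonalProjectionOnto (h ↑y) = ⟨h ↑y, hmem⟩ :=
      Submodule.orthogonalProjectionOnto_mem_subspace_eq_self (⟨h ↑y, hmem⟩ : ↥Wᗮ)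
    calc (g y : H) = ↑((Wᗮ).orthogonalProjectionOnto (h ↑y)) := rfl
      _ = h ↑y := by rw [this]
  have hgsa : IsSelfAdjoint g := by
    rw [ContinuousLinearMap.isSelfAdjoint_iff_isSymmetric]
    intro a b
    simp only [ContinuousLinearMap.coe_coe]
    rw [Submodule.coe_inner, Submodule.coe_inner, hgapp a, hgapp b]
    have := hsa.isSymmetric (↑a : H) (↑b : H)
    simpa using this
  have hgc : IsCompactOperator ⇑g := by
    have h1 : IsCompactOperator (⇑h ∘ ⇑(Wᗮ).subtypeL) := hc.comp_clm (Wᗮ).subtypeL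
    have h2 : IsCompactOperator (⇑((Wᗮ).orthogonalProjectionOnto) ∘ (⇑h ∘ ⇑(Wᗮ).subtypeL)) :=
      h1.continuous_comp ((Wᗮ).orthogonalProjectionOnto).continuous
    exact h2
  have hgnorm : ‖g‖ < ε' := by
    by_contra hge
    push_neg at hge
    have hg0 : g ≠ 0 := by
      intro h0
      rw [h0] at hge
      have hz : ‖(0 : ↥Wᗮ →L[ℂ] ↥Wᗮ)‖ = 0 := ContinuousLinearMap.opNorm_zero
      rw [hz] at hge
      linarith
    obtain ⟨r, v, hv0, hrabs, hrv⟩ := aux_exists_eig g hgc hgsa hg0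
    have hrε : ε' ≤ ‖((r:ℝ):ℂ)‖ := by
      rw [Complex.norm_real, Real.norm_eq_abs, hrabs]
      exact hge
    have hhv : h ↑v = ((r:ℝ):ℂ) • (↑v : H) := by
      rw [← hgapp, hrv]
      rfl
    have hvW₀ : (↑v : H) ∈ W₀ := by
      apply le_iSup p (⟨((r:ℝ):ℂ), hrε⟩ : ι)
      rw [hpdef]
      exact Module.End.mem_eigenspace_iff.mpr hhv
    have hvW : (↑v : H) ∈ W := W₀.le_topologicalClosure hvW₀
    have : (↑v : H) = 0 := Submodule.disjoint_def.mp W.orthogonal_disjoint _ hvW v.2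
    exact hv0 (Subtype.coe_injective (by simpa using this))
  have hnormE : ‖h ∘L (1 - E)‖ < ε := by
    have hb : ‖h ∘L (1 - E)‖ ≤ ‖g‖ := by
      apply ContinuousLinearMap.opNorm_le_bound _ (norm_nonneg g)
      intro x
      have h1 : (1 - E : H →L[ℂ] H) x = x - E x := by
        rw [ContinuousLinearMap.sub_apply, ContinuousLinearMap.one_apply]
      rw [ContinuousLinearMap.comp_apply, h1]
      set y : ↥Wᗮ := ⟨x - E x, hsubmem x⟩ with hy
      have h2 : h (x - E x) = ↑(g y) := by rw [hgapp y]
      rw [h2]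
      calc ‖(↑(g y) : H)‖ = ‖g y‖ := rfl
        _ ≤ ‖g‖ * ‖y‖ := g.le_opNorm y
        _ = ‖g‖ * ‖x - E x‖ := rfl
        _ ≤ ‖g‖ * ‖x‖ := by
            apply mul_le_mul_of_nonneg_left (hsubnorm x) (norm_nonneg g)
    calc ‖h ∘L (1 - E)‖ ≤ ‖g‖ := hb
      _ < ε' := hgnorm
      _ < ε := hε'ε
  exact ⟨E, hidem, hEsa, hfr, hcomm, hnormE, hEnorm⟩

end Aux

/-- For U° = {k compact self-adjoint : k = h·b with ‖b‖ ≤ 1 (i.e. Dk bounded, ‖Dk‖ ≤ 1)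
and kD bounded}, every ε > 0 admits a finite-rank spectral projection E of h with
‖h(I−E)‖ < ε and ‖k(I−E)‖, ‖(I−E)k‖ ≤ ε for all k ∈ U°; consequently U° is totally
bounded, hence relatively norm compact. -/
theorem stmt_8 {H : Type*} [NormedAddCommGroup H] [InnerProductSpace ℂ H] [CompleteSpace H]
    (h : H →L[ℂ] H) (hcomp : IsCompactOperator h) (hsa : IsSelfAdjoint h)
    (hinj : Function.Injective h) :
    let U : Set (H →L[ℂ] H) := {k | IsSelfAdjoint k ∧ IsCompactOperator k ∧
      (∃ b : H →L[ℂ] H, ‖b‖ ≤ 1 ∧ k = h ∘L b) ∧ (∃ c : H →L[ℂ] H, k = c ∘L h)}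
    (∀ ε : ℝ, 0 < ε → ∃ E : H →L[ℂ] H, IsIdempotentElem E ∧ IsSelfAdjoint E ∧
      FiniteDimensional ℂ (LinearMap.range (E : H →ₗ[ℂ] H)) ∧ Commute h E ∧
      ‖h ∘L (1 - E)‖ < ε ∧
      ∀ k ∈ U, ‖k ∘L (1 - E)‖ ≤ ε ∧ ‖(1 - E) ∘L k‖ ≤ ε) ∧
    TotallyBounded U := by
  intro U
  have main : ∀ ε : ℝ, 0 < ε → ∃ E : H →L[ℂ] H, IsIdempotentElem E ∧ IsSelfAdjoint E ∧
      FiniteDimensional ℂ (LinearMap.range (E : H →ₗ[ℂ] H)) ∧ Commute h E ∧ ‖E‖ ≤ 1 ∧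
      ‖h ∘L (1 - E)‖ < ε ∧
      ∀ k ∈ U, ‖k ∘L (1 - E)‖ ≤ ε ∧ ‖(1 - E) ∘L k‖ ≤ ε := by
    intro ε hε
    obtain ⟨E, h1, h2, h3, h4, h5, h6⟩ := aux_spectral h hcomp hsa hε
    refine ⟨E, h1, h2, h3, h4, h6, h5, ?_⟩
    intro k hk
    obtain ⟨ksa, kc, ⟨b, hb, hkb⟩, -⟩ := hk
    have hsa1E : IsSelfAdjoint (1 - E : H →L[ℂ] H) := by
      rw [IsSelfAdjoint, star_sub, star_one, h2.star_eq]
    have hcomm1 : Commute h (1 - E) := (Commute.one_right h).sub_right h4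
    have key : (1 - E) ∘L k = (h ∘L (1 - E)) ∘L b := by
      rw [hkb, ← ContinuousLinearMap.mul_def, ← ContinuousLinearMap.mul_def,
        ← ContinuousLinearMap.mul_def, ← ContinuousLinearMap.mul_def,
        ← mul_assoc, ← hcomm1.eq]
    have hle1 : ‖(1 - E) ∘L k‖ ≤ ε := by
      rw [key]
      calc ‖(h ∘L (1 - E)) ∘L b‖ ≤ ‖h ∘L (1 - E)‖ * ‖b‖ :=
            ContinuousLinearMap.opNorm_comp_le _ _
        _ ≤ ε * 1 := mul_le_mul h5.le hb (norm_nonneg b) hε.le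
        _ = ε := mul_one ε
    refine ⟨?_, hle1⟩
    have hadj : k ∘L (1 - E) = ContinuousLinearMap.adjoint ((1 - E) ∘L k) := by
      rw [ContinuousLinearMap.adjoint_comp, ksa.adjoint_eq, hsa1E.adjoint_eq]
    rw [hadj]
    calc ‖ContinuousLinearMap.adjoint ((1 - E) ∘L k)‖ = ‖(1 - E) ∘L k‖ :=
          ContinuousLinearMap.adjoint.norm_map _
      _ ≤ ε := hle1
  refine ⟨fun ε hε => ?_, ?_⟩
  · obtain ⟨E, h1, h2, h3, h4, h5, h6, h7⟩ := main ε hε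
    exact ⟨E, h1, h2, h3, h4, h6, h7⟩
  · rw [Metric.totallyBounded_iff]
    intro δ hδ
    obtain ⟨E, hid, hEsa, hfr, hcommE, hEnorm, hE1, hUk⟩ := main (δ/4) (by linarith)
    have hEE : ∀ z : H, E (E z) = E z := by
      intro z
      conv_rhs => rw [← hid]
      rfl
    set Φ : (H →L[ℂ] H) →ₗ[ℂ] (H →L[ℂ] H) :=
      { toFun := fun a => E ∘L a ∘L E
        map_add' := by
          intro a b
          ext x
          simp
        map_smul' := by
          intro c a
          ext x
          simp } with hΦdef
    have hΦapp : ∀ (a : H →L[ℂ] H) (x : H), (Φ a) x = E (a (E x)) := fun a x => rfl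
    set V : Submodule ℂ (H →L[ℂ] H) := LinearMap.range Φ with hVdef
    set WE : Submodule ℂ H := LinearMap.range (E : H →ₗ[ℂ] H) with hWEdef
    haveI : FiniteDimensional ℂ ↥WE := hfr
    set Ψ : (H →L[ℂ] H) →ₗ[ℂ] (↥WE →ₗ[ℂ] ↥WE) :=
      { toFun := fun a => LinearMap.codRestrict WE
          (((E ∘L a : H →L[ℂ] H) : H →ₗ[ℂ] H) ∘ₗ WE.subtype)
          (fun w => LinearMap.mem_range_self (E : H →ₗ[ℂ] H) (a ↑w))
        map_add' := by
          intro a b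
          apply LinearMap.ext
          intro w
          apply Subtype.ext
          simp
        map_smul' := by
          intro c a
          apply LinearMap.ext
          intro w
          apply Subtype.ext
          simp } with hΨdef
    have hΨapp : ∀ (a : H →L[ℂ] H) (w : ↥WE), ((Ψ a) w : H) = E (a ↑w) := fun a w => rfl
    have hker : ∀ a ∈ V, Ψ a = 0 → a = 0 := by
      rintro _ ⟨c, rfl⟩ hz
      ext x
      have hExmem : E x ∈ WE := LinearMap.mem_range_self (E : H →ₗ[ℂ] H) x
      have h1 : ((Ψ (Φ c)) ⟨E x, hExmem⟩ : H) = 0 := by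
        rw [hz]
        rfl
      rw [hΨapp] at h1
      have h2 : E ((Φ c) (E x)) = (Φ c) x := by
        rw [hΦapp, hΦapp, hEE, hEE]
      rw [h2] at h1
      exact h1
    haveI hVfd : FiniteDimensional ℂ ↥V := by
      apply FiniteDimensional.of_injective (Ψ.comp V.subtype)
      intro u v huv
      apply Subtype.ext
      have h1 : Ψ ((↑u : H →L[ℂ] H) - ↑v) = 0 := by
        rw [map_sub, show Ψ ↑u = Ψ ↑v from huv, sub_self]
      have h2 : (↑u : H →L[ℂ] H) - ↑v ∈ V := V.sub_mem u.2 v.2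
      have := hker _ h2 h1
      exact sub_eq_zero.mp this
    haveI : ProperSpace ↥V := FiniteDimensional.proper ℂ ↥V
    have hcb : IsCompact (closedBall (0:↥V) ‖h‖) := isCompact_closedBall _ _
    have htb : TotallyBounded (Subtype.val '' (closedBall (0:↥V) ‖h‖)) :=
      hcb.totallyBounded.image uniformContinuous_subtype_val
    obtain ⟨t, htf, htc⟩ := Metric.totallyBounded_iff.mp htb (δ/8) (by linarith)
    refine ⟨t, htf, ?_⟩
    intro k hk
    obtain ⟨ksa, kc, ⟨b, hb, hkb⟩, -⟩ := id hk
    have hknorm : ‖k‖ ≤ ‖h‖ := by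
      rw [hkb]
      calc ‖h ∘L b‖ ≤ ‖h‖ * ‖b‖ := ContinuousLinearMap.opNorm_comp_le _ _
        _ ≤ ‖h‖ * 1 := mul_le_mul_of_nonneg_left hb (norm_nonneg h)
        _ = ‖h‖ := mul_one _
    have hΦknorm : ‖Φ k‖ ≤ ‖h‖ := by
      have e1 : Φ k = E ∘L (k ∘L E) := rfl
      rw [e1]
      calc ‖E ∘L (k ∘L E)‖ ≤ ‖E‖ * ‖k ∘L E‖ := ContinuousLinearMap.opNorm_comp_le _ _
        _ ≤ ‖E‖ * (‖k‖ * ‖E‖) := by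
            apply mul_le_mul_of_nonneg_left (ContinuousLinearMap.opNorm_comp_le _ _)
              (norm_nonneg E)
        _ ≤ 1 * (‖h‖ * 1) := by
            have hinner : ‖k‖ * ‖E‖ ≤ ‖h‖ * 1 :=
              mul_le_mul hknorm hEnorm (norm_nonneg E) (norm_nonneg h)
            exact mul_le_mul hEnorm hinner (by positivity) zero_le_one
        _ = ‖h‖ := by ring
    have hmemV : Φ k ∈ V := LinearMap.mem_range_self Φ k
    have hmemimg : Φ k ∈ Subtype.val '' (closedBall (0:↥V) ‖h‖) := by
      refine ⟨⟨Φ k, hmemV⟩, ?_, rfl⟩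
      rw [mem_closedBall, dist_zero_right]
      exact hΦknorm
    have := htc hmemimg
    rw [Set.mem_iUnion₂] at this
    obtain ⟨y, hyt, hyb⟩ := this
    rw [mem_ball] at hyb
    have hdecomp : k - Φ k = k ∘L (1 - E) + ((1 - E) ∘L k) ∘L E := by
      have e1 : Φ k = E ∘L (k ∘L E) := rfl
      rw [e1]
      simp only [← ContinuousLinearMap.mul_def]
      noncomm_ring
    have hknear : ‖k - Φ k‖ ≤ δ/2 := by
      rw [hdecomp]
      have hb1 := (hUk k hk).1
      have hb2 := (hUk k hk).2
      calc ‖k ∘L (1 - E) + ((1 - E) ∘L k) ∘L E‖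
          ≤ ‖k ∘L (1 - E)‖ + ‖((1 - E) ∘L k) ∘L E‖ := norm_add_le _ _
        _ ≤ δ/4 + ‖(1 - E) ∘L k‖ * ‖E‖ := by
            apply add_le_add hb1 (ContinuousLinearMap.opNorm_comp_le _ _)
        _ ≤ δ/4 + (δ/4) * 1 := by
            apply add_le_add (le_refl _)
            exact mul_le_mul hb2 hEnorm (norm_nonneg E) (by linarith)
        _ = δ/2 := by ring
    rw [Set.mem_iUnion₂]
    refine ⟨y, hyt, ?_⟩
    rw [mem_ball]
    calc dist k y ≤ dist k (Φ k) + dist (Φ k) y := dist_triangle _ _ _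
      _ = ‖k - Φ k‖ + dist (Φ k) y := by rw [dist_eq_norm]
      _ < δ/2 + δ/8 := add_lt_add_of_le_of_lt hknear hyb
      _ < δ := by linarith
end

section
/- Let M(α,β) = [[0,β],[β,1/α]] with α, β > 0, let (λᵢ) be the nonzero eigenvalues (with multiplicity) of a self-adjoint operator D_p with compact inverse, and (μⱼ) those of D_q. For s > 0, the eigenvalues of the 3×3-block operator D_{α,β} (with blocks [[0, βD_p, 0],[βD_p, D_p/α, 0],[0,0,D_q/α]]) satisfy Tr(|D_{α,β}|^{−s}) = Tr(|M(α,β)|^{−s})·Tr(|D_p|^{−s}) + α^s·Tr(|D_q|^{−s}), where each side may be +∞. In particular D_{α,β} is s-summable iff both D_p and D_q are. -/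
open scoped ENNReal

/-- Trace identity Tr(|D_{α,β}|^{−s}) = Tr(|M(α,β)|^{−s})·Tr(|D_p|^{−s}) + αˢ·Tr(|D_q|^{−s}),
expressed via the eigenvalue sequences (λᵢ) of D_p, (μⱼ) of D_q and the eigenvalues
λ± of M(α,β); in particular finiteness holds iff both D_p and D_q are s-summable. -/
theorem stmt_9 (α β s : ℝ) (hα : 0 < α) (hβ : 0 < β) (hs : 0 < s)
    {ι κ : Type*} (lam : ι → ℝ) (mu : κ → ℝ)
    (hlam : ∀ i, lam i ≠ 0) (hmu : ∀ j, mu j ≠ 0) :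
    let ep : ℝ := (1 + Real.sqrt (1 + 4*α^2*β^2)) / (2*α)
    let em : ℝ := (1 - Real.sqrt (1 + 4*α^2*β^2)) / (2*α)
    ((∑' i : ι, (ENNReal.ofReal (|lam i * ep| ^ (-s)) + ENNReal.ofReal (|lam i * em| ^ (-s))))
        + ∑' j : κ, ENNReal.ofReal (|mu j / α| ^ (-s))
      = (ENNReal.ofReal (|ep| ^ (-s)) + ENNReal.ofReal (|em| ^ (-s))) *
          (∑' i : ι, ENNReal.ofReal (|lam i| ^ (-s)))
        + ENNReal.ofReal (α ^ s) * (∑' j : κ, ENNReal.ofReal (|mu j| ^ (-s)))) ∧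
    ((∑' i : ι, (ENNReal.ofReal (|lam i * ep| ^ (-s)) + ENNReal.ofReal (|lam i * em| ^ (-s))))
        + ∑' j : κ, ENNReal.ofReal (|mu j / α| ^ (-s)) ≠ ⊤ ↔
      ((∑' i : ι, ENNReal.ofReal (|lam i| ^ (-s))) ≠ ⊤ ∧
        (∑' j : κ, ENNReal.ofReal (|mu j| ^ (-s))) ≠ ⊤)) := by
  intro ep em
  have hR : (1:ℝ) < Real.sqrt (1 + 4*α^2*β^2) := by
    have h1 : (1:ℝ) < 1 + 4*α^2*β^2 := by
      nlinarith [mul_pos (mul_pos hα hα) (mul_pos hβ hβ)]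
    calc (1:ℝ) = Real.sqrt 1 := by simp
      _ < Real.sqrt (1 + 4*α^2*β^2) := Real.sqrt_lt_sqrt zero_le_one h1
  have hep : 0 < ep := by
    apply div_pos (by linarith) (by linarith)
  have hem : em < 0 := by
    apply div_neg_of_neg_of_pos (by linarith) (by linarith)
  have hepne : ep ≠ 0 := ne_of_gt hep
  have hemne : em ≠ 0 := ne_of_lt hem
  -- pointwise identities
  have key1 : ∀ (x e : ℝ), e ≠ 0 →
      ENNReal.ofReal (|x * e| ^ (-s)) =
        ENNReal.ofReal (|x| ^ (-s)) * ENNReal.ofReal (|e| ^ (-s)) := by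
    intro x e he
    rw [abs_mul, Real.mul_rpow (abs_nonneg x) (abs_nonneg e),
      ENNReal.ofReal_mul (Real.rpow_nonneg (abs_nonneg x) _)]
  have key2 : ∀ j, ENNReal.ofReal (|mu j / α| ^ (-s)) =
      ENNReal.ofReal (α ^ s) * ENNReal.ofReal (|mu j| ^ (-s)) := by
    intro j
    have : |mu j / α| = |mu j| * α⁻¹ := by
      rw [abs_div, abs_of_pos hα, div_eq_mul_inv]
    rw [this, Real.mul_rpow (abs_nonneg _) (inv_nonneg.mpr hα.le),
      Real.inv_rpow hα.le, ← Real.rpow_neg hα.le, neg_neg,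
      ENNReal.ofReal_mul (Real.rpow_nonneg (abs_nonneg _) _), mul_comm]
  have heq :
      (∑' i : ι, (ENNReal.ofReal (|lam i * ep| ^ (-s)) + ENNReal.ofReal (|lam i * em| ^ (-s))))
        + ∑' j : κ, ENNReal.ofReal (|mu j / α| ^ (-s))
      = (ENNReal.ofReal (|ep| ^ (-s)) + ENNReal.ofReal (|em| ^ (-s))) *
          (∑' i : ι, ENNReal.ofReal (|lam i| ^ (-s)))
        + ENNReal.ofReal (α ^ s) * (∑' j : κ, ENNReal.ofReal (|mu j| ^ (-s))) := by
    congr 1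
    · calc (∑' i : ι, (ENNReal.ofReal (|lam i * ep| ^ (-s)) + ENNReal.ofReal (|lam i * em| ^ (-s))))
          = ∑' i : ι, ENNReal.ofReal (|lam i| ^ (-s)) *
              (ENNReal.ofReal (|ep| ^ (-s)) + ENNReal.ofReal (|em| ^ (-s))) := by
            apply tsum_congr; intro i
            rw [key1 _ _ hepne, key1 _ _ hemne, mul_add]
        _ = (∑' i : ι, ENNReal.ofReal (|lam i| ^ (-s))) *
              (ENNReal.ofReal (|ep| ^ (-s)) + ENNReal.ofReal (|em| ^ (-s))) :=
            ENNReal.tsum_mul_right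
        _ = _ := mul_comm _ _
    · rw [tsum_congr key2, ENNReal.tsum_mul_left]
  refine ⟨heq, ?_⟩
  rw [heq]
  have hc0 : (ENNReal.ofReal (|ep| ^ (-s)) + ENNReal.ofReal (|em| ^ (-s))) ≠ 0 := by
    have : 0 < |ep| ^ (-s) := Real.rpow_pos_of_pos (abs_pos.mpr hepne) _
    simp only [ne_eq, add_eq_zero, not_and_or]
    left
    exact (ENNReal.ofReal_pos.mpr this).ne'
  have hctop : (ENNReal.ofReal (|ep| ^ (-s)) + ENNReal.ofReal (|em| ^ (-s))) ≠ ⊤ := by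
    simp [ENNReal.add_eq_top]
  have hd0 : ENNReal.ofReal (α ^ s) ≠ 0 :=
    (ENNReal.ofReal_pos.mpr (Real.rpow_pos_of_pos hα s)).ne'
  have hdtop : ENNReal.ofReal (α ^ s) ≠ ⊤ := ENNReal.ofReal_ne_top
  rw [ne_eq, ENNReal.add_eq_top, not_or, ne_eq, ENNReal.mul_eq_top, ne_eq, ENNReal.mul_eq_top]
  constructor
  · rintro ⟨h1, h2⟩
    constructor
    · by_contra h; exact h1 (Or.inl ⟨hc0, h⟩)
    · by_contra h; exact h2 (Or.inl ⟨hd0, h⟩)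
  · rintro ⟨h1, h2⟩
    exact ⟨by rintro (⟨_, h⟩ | ⟨h, _⟩) <;> [exact h1 h; exact hctop h],
      by rintro (⟨_, h⟩ | ⟨h, _⟩) <;> [exact h2 h; exact hdtop h]⟩
end

section
/- In the setting of the bridge seminorm L(a,b) = max{L₃(a), L₂(b), R·L₃(a−b), R·L₂(a−b), M·|σ(a−b)|} with s·L₂ ≤ L₁ ≤ r·L₂, L₃ = (1/√(rs))L₁, and R = √s/(√r − √s) (0 < s < r): for every a with L₃(a) ≤ 1, the element b := √(s/r)·a + (1 − √(s/r))·σ(a)·e satisfies L(a,b) ≤ 1. Hence the quotient of L to the first summand equals L₃, i.e. inf{L(a,b) : b ∈ V} = L₃(a) for all a. -/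
private lemma padd_smul_e {V : Type*} [AddCommGroup V] [Module ℝ V]
    (p : Seminorm ℝ V) (e : V) (hpe : p e = 0) (a : V) (c : ℝ) :
    p (a + c • e) = p a := by
  have hce : p (c • e) = 0 := by
    rw [map_smul_eq_mul, hpe, mul_zero]
  apply le_antisymm
  · calc p (a + c • e) ≤ p a + p (c • e) := map_add_le_add p a _
      _ = p a := by rw [hce, add_zero]
  · calc p a = p ((a + c • e) + (-c) • e) := by congr 1; module
      _ ≤ p (a + c • e) + p ((-c) • e) := map_add_le_add p _ _
      _ = p (a + c • e) := by
          rw [map_smul_eq_mul, hpe, mul_zero, add_zero]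

private lemma psmul_nonneg {V : Type*} [AddCommGroup V] [Module ℝ V]
    (p : Seminorm ℝ V) (c : ℝ) (hc : 0 ≤ c) (a : V) : p (c • a) = c * p a := by
  rw [map_smul_eq_mul, Real.norm_eq_abs, abs_of_nonneg hc]

/-- In the bridge construction with s·L₂ ≤ L₁ ≤ r·L₂, L₃ = (1/√(rs))·L₁ and
R = √s/(√r−√s): for L₃(a) ≤ 1 the element b = √(s/r)·a + (1−√(s/r))·σ(a)·e satisfies
L(a,b) ≤ 1; hence the quotient of L to the first summand equals L₃, i.e.
inf{L(a,b) : b ∈ V} = L₃(a). -/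
theorem stmt_12 {V : Type*} [AddCommGroup V] [Module ℝ V]
    (e : V) (he : e ≠ 0) (L₁ L₂ : Seminorm ℝ V)
    (h1 : ∀ a, L₁ a = 0 ↔ ∃ c : ℝ, a = c • e)
    (h2 : ∀ a, L₂ a = 0 ↔ ∃ c : ℝ, a = c • e)
    (σ : V →ₗ[ℝ] ℝ) (hσ : σ e = 1)
    (s r : ℝ) (hs : 0 < s) (hsr : s < r)
    (hL : ∀ a, s * L₂ a ≤ L₁ a ∧ L₁ a ≤ r * L₂ a)
    (M : ℝ) (hM : 0 < M) :
    let L₃ : V → ℝ := fun a => (1 / Real.sqrt (r * s)) * L₁ a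
    let R : ℝ := Real.sqrt s / (Real.sqrt r - Real.sqrt s)
    let L : V × V → ℝ := fun p =>
      max (max (max (L₃ p.1) (L₂ p.2)) (max (R * L₃ (p.1 - p.2)) (R * L₂ (p.1 - p.2))))
        (M * |σ (p.1 - p.2)|)
    (∀ a : V, L₃ a ≤ 1 →
      L (a, Real.sqrt (s/r) • a + ((1 - Real.sqrt (s/r)) * σ a) • e) ≤ 1) ∧
    (∀ a : V, IsGLB {x : ℝ | ∃ b : V, x = L (a, b)} (L₃ a)) := by
  intro L₃ R L
  have hr : (0:ℝ) < r := hs.trans hsr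
  have hL₃def : ∀ a : V, L₃ a = (1 / Real.sqrt (r * s)) * L₁ a := fun _ => rfl
  have hLdef : ∀ p : V × V, L p =
      max (max (max (L₃ p.1) (L₂ p.2)) (max (R * L₃ (p.1 - p.2)) (R * L₂ (p.1 - p.2))))
        (M * |σ (p.1 - p.2)|) := fun _ => rfl
  have hRdef : R = Real.sqrt s / (Real.sqrt r - Real.sqrt s) := rfl
  clear_value L₃ R L
  set u := Real.sqrt r with hu
  set v := Real.sqrt s with hv
  have hv0 : 0 < v := Real.sqrt_pos.mpr hs
  have hu0 : 0 < u := Real.sqrt_pos.mpr hr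
  have hvu : v < u := Real.sqrt_lt_sqrt hs.le hsr
  have huv0 : u - v ≠ 0 := sub_ne_zero.mpr hvu.ne'
  have hv2 : v ^ 2 = s := Real.sq_sqrt hs.le
  have hrs : Real.sqrt (r * s) = u * v := Real.sqrt_mul hr.le s
  have htdef : Real.sqrt (s / r) = v / u := Real.sqrt_div hs.le r
  set t := v / u with ht
  have ht0 : 0 < t := div_pos hv0 hu0
  have ht1 : t < 1 := (div_lt_one hu0).mpr hvu
  have hL₃def' : ∀ a : V, L₃ a = 1 / (u * v) * L₁ a := by
    intro a; rw [hL₃def, hrs]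
  have hRt : R * (1 - t) = t := by
    rw [hRdef, ht]
    field_simp
  have hR0 : 0 < R := by
    rw [hRdef]; exact div_pos hv0 (by linarith)
  clear_value t u v
  -- seminorms vanish on e
  have hL1e : L₁ e = 0 := (h1 e).mpr ⟨1, (one_smul ℝ e).symm⟩
  have hL2e : L₂ e = 0 := (h2 e).mpr ⟨1, (one_smul ℝ e).symm⟩
  have hL3nn : ∀ a : V, 0 ≤ L₃ a := by
    intro a
    rw [hL₃def' a]
    have := apply_nonneg L₁ a
    positivity
  -- t * L₂ a ≤ L₃ a
  have key2 : ∀ a : V, t * L₂ a ≤ L₃ a := by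
    intro a
    have h := (hL a).1
    have h' : t * L₂ a ≤ t * (L₁ a / s) := by
      apply mul_le_mul_of_nonneg_left _ ht0.le
      rw [le_div_iff₀ hs]; linarith [h]
    refine h'.trans_eq ?_
    rw [hL₃def' a, ht, ← hv2]
    field_simp
  -- main estimate
  have main : ∀ a : V,
      L (a, Real.sqrt (s/r) • a + ((1 - Real.sqrt (s/r)) * σ a) • e) ≤ L₃ a := by
    intro a
    set b := Real.sqrt (s/r) • a + ((1 - Real.sqrt (s/r)) * σ a) • e with hb
    have hb' : b = t • a + ((1 - t) * σ a) • e := by rw [hb, htdef]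
    have hab : a - b = (1 - t) • (a - σ a • e) := by rw [hb']; module
    have hL1ab : L₁ (a - b) = (1 - t) * L₁ a := by
      rw [hab, psmul_nonneg L₁ _ (by linarith) _]
      congr 1
      have h : a - σ a • e = a + (-(σ a)) • e := by module
      rw [h, padd_smul_e L₁ e hL1e]
    have hL2ab : L₂ (a - b) = (1 - t) * L₂ a := by
      rw [hab, psmul_nonneg L₂ _ (by linarith) _]
      congr 1
      have h : a - σ a • e = a + (-(σ a)) • e := by module
      rw [h, padd_smul_e L₂ e hL2e]
    have hL2b : L₂ b = t * L₂ a := by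
      rw [hb', padd_smul_e L₂ e hL2e, psmul_nonneg L₂ _ ht0.le]
    have hσab : σ (a - b) = 0 := by
      rw [hab, map_smul, smul_eq_mul, map_sub, map_smul, smul_eq_mul, hσ]
      ring
    have e2 : L₂ b ≤ L₃ a := by rw [hL2b]; exact key2 a
    have e3 : R * L₃ (a - b) ≤ L₃ a := by
      rw [hL₃def' (a - b), hL1ab, hL₃def' a]
      have heq : R * (1 / (u * v) * ((1 - t) * L₁ a)) = t * (1 / (u * v) * L₁ a) := by
        linear_combination (1 / (u * v) * L₁ a) * hRt
      rw [heq]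
      have hnn : 0 ≤ 1 / (u * v) * L₁ a := by
        have := apply_nonneg L₁ a; positivity
      nlinarith
    have e4 : R * L₂ (a - b) ≤ L₃ a := by
      rw [hL2ab, ← mul_assoc, hRt]; exact key2 a
    have e5 : M * |σ (a - b)| ≤ L₃ a := by
      rw [hσab, abs_zero, mul_zero]; exact hL3nn a
    rw [hLdef]
    exact max_le (max_le (max_le le_rfl e2) (max_le e3 e4)) e5
  constructor
  · intro a ha
    exact (main a).trans ha
  · intro a
    constructor
    · rintro x ⟨b, rfl⟩
      rw [hLdef]
      exact le_trans (le_max_left _ _) (le_trans (le_max_left _ _) (le_max_left _ _))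
    · intro y hy
      have hmem : L (a, Real.sqrt (s/r) • a + ((1 - Real.sqrt (s/r)) * σ a) • e)
          ∈ {x : ℝ | ∃ b : V, x = L (a, b)} := ⟨_, rfl⟩
      exact (hy hmem).trans (main a)
end
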